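/- Every connected graph G has a spanning tree T such that π_p(G) = π_p(T), where π_p denotes the path partition number. -/

import Mathlib

open SimpleGraph

variable {V : Type*}

/-- A walk is an induced path: it is a path and every adjacency between its
vertices is an edge of the walk. -/
def IsInducedWalk (G : SimpleGraph V) {u v : V} (p : G.Walk u v) : Prop :=
  p.IsPath ∧ ∀ a ∈ p.support, ∀ b ∈ p.support, G.Adj a b → s(a, b) ∈ p.edges

/-- A walk is an isometric (shortest) path between its endpoints. -/
def IsIsometricWalk (G : SimpleGraph V) {u v : V} (p : G.Walk u v) : Prop :=
  p.IsPath ∧ p.length = G.dist u v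

/-- A family of walks is a path cover: each walk is a path and every
vertex lies on at least one of the walks. -/
def IsPathCover (G : SimpleGraph V) {n : ℕ}
    (P : Fin n → Σ u : V, Σ v : V, G.Walk u v) : Prop :=
  (∀ i, (P i).2.2.IsPath) ∧ ∀ x : V, ∃ i, x ∈ (P i).2.2.support

/-- A family of walks is a path partition: each walk is a path and every
vertex lies on exactly one of the walks. -/
def IsPathPartition (G : SimpleGraph V) {n : ℕ}
    (P : Fin n → Σ u : V, Σ v : V, G.Walk u v) : Prop :=
  (∀ i, (P i).2.2.IsPath) ∧ ∀ x : V, ∃! i, x ∈ (P i).2.2.support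

/-- π_c : the path cover number. -/
noncomputable def pathCoverNum (G : SimpleGraph V) : ℕ :=
  sInf {n | ∃ P : Fin n → Σ u : V, Σ v : V, G.Walk u v, IsPathCover G P}

/-- ρ_c : the induced path cover number. -/
noncomputable def inducedPathCoverNum (G : SimpleGraph V) : ℕ :=
  sInf {n | ∃ P : Fin n → Σ u : V, Σ v : V, G.Walk u v,
    IsPathCover G P ∧ ∀ i, IsInducedWalk G (P i).2.2}

/-- ip_c : the isometric path cover number. -/
noncomputable def isometricPathCoverNum (G : SimpleGraph V) : ℕ :=
  sInf {n | ∃ P : Fin n → Σ u : V, Σ v : V, G.Walk u v,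
    IsPathCover G P ∧ ∀ i, IsIsometricWalk G (P i).2.2}

/-- π_p : the path partition number. -/
noncomputable def pathPartitionNum (G : SimpleGraph V) : ℕ :=
  sInf {n | ∃ P : Fin n → Σ u : V, Σ v : V, G.Walk u v, IsPathPartition G P}

/-- ρ_p : the induced path partition number. -/
noncomputable def inducedPathPartitionNum (G : SimpleGraph V) : ℕ :=
  sInf {n | ∃ P : Fin n → Σ u : V, Σ v : V, G.Walk u v,
    IsPathPartition G P ∧ ∀ i, IsInducedWalk G (P i).2.2}

/-- ip_p : the isometric path partition number. -/
noncomputable def isometricPathPartitionNum (G : SimpleGraph V) : ℕ :=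
  sInf {n | ∃ P : Fin n → Σ u : V, Σ v : V, G.Walk u v,
    IsPathPartition G P ∧ ∀ i, IsIsometricWalk G (P i).2.2}



section AuxProofs
variable {V : Type*}

/-- Adding an edge between two non-reachable vertices keeps a graph acyclic. -/
private lemma aux_acyclic_sup_edge {F : SimpleGraph V} (hF : F.IsAcyclic) {a b : V}
    (h : ¬ F.Reachable a b) : (F ⊔ fromEdgeSet {s(a, b)}).IsAcyclic := by
  classical
  intro u c hc
  by_cases he : s(a, b) ∈ c.edges
  · have hr := (adj_and_reachable_delete_edges_iff_exists_cycle).2 ⟨u, c, hc, he⟩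
    apply h
    refine hr.2.mono ?_
    intro x y hxy
    rw [deleteEdges_adj, sup_adj] at hxy
    rcases hxy with ⟨hF' | hE, hne⟩
    · exact hF'
    · exact absurd hE.1 hne
  · have hsub : ∀ e ∈ c.edges, e ∈ F.edgeSet := by
      intro e hec
      have hmem := c.edges_subset_edgeSet hec
      rw [edgeSet_sup, edgeSet_fromEdgeSet] at hmem
      rcases hmem with h1 | h2
      · exact h1
      · rw [h2.1] at hec; exact absurd hec he
    exact hF (c.transfer F hsub) (hc.transfer hsub)

/-- The graph of the edges of a path is acyclic. -/
private lemma aux_acyclic_path_graph {G : SimpleGraph V} :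
    ∀ {u v : V} (p : G.Walk u v), p.IsPath →
      (fromEdgeSet {e | e ∈ p.edges}).IsAcyclic := by
  intro u v p
  induction p with
  | nil =>
    intro _
    simp only [Walk.edges_nil, List.not_mem_nil, Set.setOf_false, fromEdgeSet_empty]
    exact isAcyclic_bot
  | @cons x z v h q ih =>
    intro hp
    rw [Walk.cons_isPath_iff] at hp
    have hset : {e : Sym2 V | e ∈ (Walk.cons h q).edges} =
        {s(x, z)} ∪ {e | e ∈ q.edges} := by
      ext e
      simp [Walk.edges_cons, or_comm]
    rw [hset, fromEdgeSet_union, sup_comm]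
    apply aux_acyclic_sup_edge (ih hp.1)
    rintro ⟨w⟩
    cases w with
    | nil => exact hp.2 q.start_mem_support
    | cons h' w' =>
      rw [fromEdgeSet_adj] at h'
      exact hp.2 (SimpleGraph.Walk.fst_mem_support_of_mem_edges q h'.1)

/-- The union of the edges of a path partition is acyclic. -/
private lemma aux_partition_forest {G : SimpleGraph V} {n : ℕ}
    {P : Fin n → Σ u : V, Σ v : V, G.Walk u v} (hP : IsPathPartition G P) :
    (fromEdgeSet {e | ∃ i, e ∈ (P i).2.2.edges}).IsAcyclic := by
  classical
  intro u c hc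
  obtain ⟨i₀, hi₀, -⟩ := hP.2 u
  have key : ∀ {x y : V} (w : (fromEdgeSet {e | ∃ i, e ∈ (P i).2.2.edges}).Walk x y),
      x ∈ (P i₀).2.2.support → ∀ e ∈ w.edges, e ∈ (P i₀).2.2.edges := by
    intro x y w
    induction w with
    | nil => simp
    | @cons x z y h w ih =>
      intro hx e hew
      have hadj := h
      rw [fromEdgeSet_adj] at hadj
      obtain ⟨⟨j, hj⟩, hne⟩ := hadj
      have hxj : x ∈ (P j).2.2.support := SimpleGraph.Walk.fst_mem_support_of_mem_edges _ hj
      have hji : j = i₀ := (hP.2 x).unique hxj hx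
      subst hji
      have hz : z ∈ (P j).2.2.support := SimpleGraph.Walk.snd_mem_support_of_mem_edges _ hj
      rw [Walk.edges_cons, List.mem_cons] at hew
      rcases hew with rfl | hew
      · exact hj
      · exact ih hz e hew
  have hsub : ∀ e ∈ c.edges, e ∈ (fromEdgeSet {e | e ∈ (P i₀).2.2.edges}).edgeSet := by
    intro e hec
    rw [edgeSet_fromEdgeSet]
    refine ⟨key c hi₀ e hec, ?_⟩
    exact G.not_isDiag_of_mem_edgeSet ((P i₀).2.2.edges_subset_edgeSet (key c hi₀ e hec))
  exact aux_acyclic_path_graph (P i₀).2.2 (hP.1 i₀) (c.transfer _ hsub) (hc.transfer hsub)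

/-- Any acyclic subgraph of a finite connected graph extends to a spanning tree. -/
private lemma aux_exists_tree_ext [Fintype V] {G : SimpleGraph V} (hG : G.Connected) :
    ∀ (F : SimpleGraph V), F ≤ G → F.IsAcyclic → ∃ T, F ≤ T ∧ T ≤ G ∧ T.IsTree := by
  classical
  have main : ∀ (m : ℕ) (F : SimpleGraph V), (G.edgeSet \ F.edgeSet).ncard = m →
      F ≤ G → F.IsAcyclic → ∃ T, F ≤ T ∧ T ≤ G ∧ T.IsTree := by
    intro m
    induction m using Nat.strong_induction_on with
    | _ m ih =>
      intro F hm hle hac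
      by_cases hconn : F.Connected
      · exact ⟨F, le_rfl, hle, ⟨hconn, hac⟩⟩
      · have hV : Nonempty V := hG.nonempty
        have hpre : ¬ F.Preconnected := fun hp => hconn ((connected_iff F).mpr ⟨hp, hV⟩)
        rw [SimpleGraph.Preconnected] at hpre
        push_neg at hpre
        obtain ⟨a, b, hab⟩ := hpre
        obtain ⟨w⟩ := hG.preconnected a b
        have step : ∀ {x y : V} (w : G.Walk x y), ¬F.Reachable x y →
            ∃ p q : V, G.Adj p q ∧ ¬F.Reachable p q := by
          intro x y w
          induction w with
          | nil => intro hr; exact absurd (Reachable.refl _) hr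
          | @cons x z y h w ih' =>
            intro hr
            by_cases hxz : F.Reachable x z
            · exact ih' (fun hzy => hr (hxz.trans hzy))
            · exact ⟨x, z, h, hxz⟩
        obtain ⟨p, q, hpq, hnr⟩ := step w hab
        have hne : p ≠ q := hpq.ne
        have hF'le : F ⊔ fromEdgeSet {s(p, q)} ≤ G := by
          apply sup_le hle
          intro x y hxy
          rw [fromEdgeSet_adj, Set.mem_singleton_iff] at hxy
          have h2 := hxy.1
          rw [Sym2.eq_iff] at h2
          rcases h2 with ⟨rfl, rfl⟩ | ⟨rfl, rfl⟩
          · exact hpq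
          · exact hpq.symm
        have hF'ac := aux_acyclic_sup_edge hac hnr
        have hmemG : s(p, q) ∈ G.edgeSet := hpq
        have hnotF : s(p, q) ∉ F.edgeSet := fun h => hnr (SimpleGraph.Adj.reachable h)
        have hmemF' : s(p, q) ∈ (F ⊔ fromEdgeSet {s(p, q)}).edgeSet := by
          rw [edgeSet_sup, edgeSet_fromEdgeSet]
          right
          exact ⟨rfl, by simp [hne]⟩
        have hsubset : G.edgeSet \ (F ⊔ fromEdgeSet {s(p, q)}).edgeSet ⊆
            G.edgeSet \ F.edgeSet := fun e he =>
          ⟨he.1, fun hf => he.2 (edgeSet_mono le_sup_left hf)⟩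
        have hss := (Set.ssubset_iff_of_subset hsubset).2
          ⟨s(p, q), ⟨hmemG, hnotF⟩, fun hmem => hmem.2 hmemF'⟩
        have hlt : (G.edgeSet \ (F ⊔ fromEdgeSet {s(p, q)}).edgeSet).ncard < m := by
          rw [← hm]
          exact Set.ncard_lt_ncard hss (Set.toFinite _)
        obtain ⟨T, h1, h2, h3⟩ := ih _ hlt _ rfl hF'le hF'ac
        exact ⟨T, le_sup_left.trans h1, h2, h3⟩
  intro F hle hac
  exact main _ F rfl hle hac

private lemma aux_pp_nonempty [Fintype V] (G : SimpleGraph V) :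
    {n | ∃ P : Fin n → Σ u : V, Σ v : V, G.Walk u v, IsPathPartition G P}.Nonempty := by
  classical
  refine ⟨Fintype.card V, fun i => ⟨(Fintype.equivFin V).symm i,
    (Fintype.equivFin V).symm i, SimpleGraph.Walk.nil⟩, fun i => SimpleGraph.Walk.IsPath.nil, ?_⟩
  intro x
  refine ⟨Fintype.equivFin V x, by simp, ?_⟩
  intro j hj
  simp only [Walk.support_nil, List.mem_singleton] at hj
  rw [hj]
  simp

private lemma aux_transfer_partition {H G : SimpleGraph V} {n : ℕ}
    {P : Fin n → Σ u : V, Σ v : V, H.Walk u v} (hP : IsPathPartition H P)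
    (hed : ∀ i, ∀ e ∈ (P i).2.2.edges, e ∈ G.edgeSet) :
    ∃ Q : Fin n → Σ u : V, Σ v : V, G.Walk u v, IsPathPartition G Q := by
  refine ⟨fun i => ⟨(P i).1, (P i).2.1, (P i).2.2.transfer G (hed i)⟩, fun i => ?_, fun x => ?_⟩
  · exact (hP.1 i).transfer _
  · simpa only [Walk.support_transfer] using hP.2 x

end AuxProofs

theorem stmt_14 {V : Type*} [Fintype V] (G : SimpleGraph V) (hconn : G.Connected) :
    ∃ T : SimpleGraph V, T ≤ G ∧ T.IsTree ∧ pathPartitionNum G = pathPartitionNum T := by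
  classical
  obtain ⟨P, hP⟩ := Nat.sInf_mem (aux_pp_nonempty G)
  have hFG : fromEdgeSet {e | ∃ i, e ∈ (P i).2.2.edges} ≤ G := by
    intro x y hxy
    rw [fromEdgeSet_adj] at hxy
    obtain ⟨⟨i, hi⟩, -⟩ := hxy
    exact SimpleGraph.Walk.adj_of_mem_edges _ hi
  obtain ⟨T, hFT, hTG, hT⟩ := aux_exists_tree_ext hconn _ hFG (aux_partition_forest hP)
  refine ⟨T, hTG, hT, le_antisymm ?_ ?_⟩
  · -- π_p(G) ≤ π_p(T) : transfer an optimal partition of T to G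
    obtain ⟨Q, hQ⟩ := Nat.sInf_mem (aux_pp_nonempty T)
    obtain ⟨R, hR⟩ := aux_transfer_partition hQ
      (fun i e he => edgeSet_mono hTG ((Q i).2.2.edges_subset_edgeSet he))
    exact Nat.sInf_le ⟨R, hR⟩
  · -- π_p(T) ≤ π_p(G) : transfer P into T
    have hed : ∀ i, ∀ e ∈ (P i).2.2.edges, e ∈ T.edgeSet := by
      intro i e he
      apply edgeSet_mono hFT
      rw [edgeSet_fromEdgeSet]
      exact ⟨⟨i, he⟩, G.not_isDiag_of_mem_edgeSet ((P i).2.2.edges_subset_edgeSet he)⟩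
    obtain ⟨Q, hQ⟩ := aux_transfer_partition hP hed
    exact Nat.sInf_le ⟨Q, hQ⟩
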